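/- (Flat maximum inequality.) Let R be a d × d real symmetric positive semidefinite matrix with unit diagonal (R_ii = 1) and nonnegative entries (R_ij ≥ 0). Let v, w ∈ ℝᵈ have nonnegative entries with Σᵢ v_i = 1 and Σᵢ w_i = 1, and suppose vᵀRv > 0 and wᵀRw > 0. Then the correlation r(v,w) = vᵀRw / √((vᵀRv)(wᵀRw)) between the two weighted sums satisfies r(v,w) ≥ vᵀRw = Σᵢ Σⱼ v_i w_j R_ij. -/

import Mathlib

open Matrix

lemma entry_le_one {d : ℕ} (R : Matrix (Fin d) (Fin d) ℝ)
    (hR : R.PosSemidef) (hdiag : ∀ i, R i i = 1) (i j : Fin d) : R i j ≤ 1 := by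
  by_cases hij : i = j
  · subst hij; rw [hdiag]
  have hji : R j i = R i j := by
    have := congrFun (congrFun hR.1 j) i
    simpa [Matrix.transpose_apply] using this.symm
  set x : Fin d → ℝ := fun k => if k = i then 1 else if k = j then -1 else 0 with hxdef
  have inner : ∀ k, ∑ l, R k l * x l = R k i - R k j := by
    intro k
    have he : ∀ l, R k l * x l =
        (if l = i then R k i else 0) - (if l = j then R k j else 0) := by
      intro l; simp only [hxdef]
      split_ifs with h1 h2 <;> simp_all
    simp [he, Finset.sum_sub_distrib]
  have h := hR.dotProduct_mulVec_nonneg x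
  simp only [star_trivial, dotProduct, mulVec] at h
  simp only [inner] at h
  have he2 : ∀ k, x k * (R k i - R k j) =
      (if k = i then R i i - R i j else 0) - (if k = j then R j i - R j j else 0) := by
    intro k; simp only [hxdef]
    split_ifs with h1 h2 <;> simp_all
  simp only [he2, Finset.sum_sub_distrib, Finset.sum_ite_eq', Finset.mem_univ, if_true] at h
  nlinarith [hdiag i, hdiag j]

/-- Flat maximum inequality: if `R` is a symmetric positive semidefinite
correlation matrix with unit diagonal and nonnegative entries, and `v`, `w`
are nonnegative weight vectors summing to `1` with `vᵀRv > 0` and `wᵀRw > 0`,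
then the correlation `r(v,w) = vᵀRw / √((vᵀRv)(wᵀRw))` between the two
weighted sums is at least `vᵀRw = Σᵢ Σⱼ vᵢ wⱼ Rᵢⱼ`. -/
theorem flat_maximum_inequality (d : ℕ) (R : Matrix (Fin d) (Fin d) ℝ)
    (hR : R.PosSemidef) (hdiag : ∀ i, R i i = 1) (hnonneg : ∀ i j, 0 ≤ R i j)
    (v w : Fin d → ℝ) (hv : ∀ i, 0 ≤ v i) (hw : ∀ i, 0 ≤ w i)
    (hvsum : ∑ i, v i = 1) (hwsum : ∑ i, w i = 1)
    (hvv : 0 < v ⬝ᵥ (R *ᵥ v)) (hww : 0 < w ⬝ᵥ (R *ᵥ w)) :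
    v ⬝ᵥ (R *ᵥ w) / Real.sqrt ((v ⬝ᵥ (R *ᵥ v)) * (w ⬝ᵥ (R *ᵥ w)))
      ≥ v ⬝ᵥ (R *ᵥ w) := by
  have key : ∀ (x : Fin d → ℝ), (∀ i, 0 ≤ x i) → (∑ i, x i = 1) →
      x ⬝ᵥ (R *ᵥ x) ≤ 1 := by
    intro x hx hxs
    have hle : x ⬝ᵥ (R *ᵥ x) ≤ ∑ i, ∑ j, x i * x j := by
      simp only [dotProduct, mulVec, Finset.mul_sum]
      apply Finset.sum_le_sum
      intro i _
      apply Finset.sum_le_sum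
      intro j _
      have h1 := entry_le_one R hR hdiag i j
      nlinarith [mul_nonneg (hx i) (hx j)]
    calc x ⬝ᵥ (R *ᵥ x) ≤ ∑ i, ∑ j, x i * x j := hle
      _ = 1 := by rw [← Finset.sum_mul_sum, hxs]; ring
  have hvw : 0 ≤ v ⬝ᵥ (R *ᵥ w) := by
    simp only [dotProduct, mulVec]
    apply Finset.sum_nonneg; intro i _
    apply mul_nonneg (hv i)
    apply Finset.sum_nonneg; intro j _
    exact mul_nonneg (hnonneg i j) (hw j)
  have hs : Real.sqrt ((v ⬝ᵥ (R *ᵥ v)) * (w ⬝ᵥ (R *ᵥ w))) ≤ 1 := by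
    rw [show (1:ℝ) = Real.sqrt 1 by simp]
    apply Real.sqrt_le_sqrt
    nlinarith [key v hv hvsum, key w hw hwsum]
  have hs0 : 0 < Real.sqrt ((v ⬝ᵥ (R *ᵥ v)) * (w ⬝ᵥ (R *ᵥ w))) :=
    Real.sqrt_pos.mpr (mul_pos hvv hww)
  rw [ge_iff_le, le_div_iff₀ hs0]
  nlinarith
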